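/- A finitely generated R-module M is c-S-finitely presented if and only if there is a finitely presented submodule N of M such that the localizations M_S and N_S are equal (the inclusion N → M localizes to an isomorphism). -/

import Mathlib

def IsSFinite {R : Type*} [CommRing R] (S : Submonoid R) (M : Type*) [AddCommGroup M]
    [Module R M] : Prop :=
  ∃ s ∈ S, ∃ N : Submodule R M, N.FG ∧ ∀ m : M, s • m ∈ N

theorem cSfp_iff_localization_eq {R : Type*} [CommRing R] (S : Submonoid R)
    (M : Type*) [AddCommGroup M] [Module R M] (hM : Module.Finite R M) :
    (∃ N : Submodule R M, Module.FinitePresentation R ↥N ∧ ∃ s ∈ S, ∀ m : M, s • m ∈ N) ↔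
      ∃ N : Submodule R M, Module.FinitePresentation R ↥N ∧ Submodule.localized S N = ⊤ := by
  constructor
  · rintro ⟨N, hN, s, hs, h⟩
    refine ⟨N, hN, ?_⟩
    rw [eq_top_iff]
    rintro x -
    obtain ⟨⟨m, t⟩, rfl⟩ := IsLocalizedModule.mk'_surjective S
      (LocalizedModule.mkLinearMap S M) x
    refine ⟨s • m, h m, ⟨s, hs⟩ * t, ?_⟩
    exact IsLocalizedModule.mk'_cancel_left _ _ _ _
  · rintro ⟨N, hN, hloc⟩
    obtain ⟨T, hT⟩ := hM.fg_top
    have key : ∀ x : M, ∃ u : S, (u : R) • x ∈ N := by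
      intro x
      have hx : LocalizedModule.mkLinearMap S M x ∈ Submodule.localized S N := by
        rw [hloc]; trivial
      obtain ⟨n, hn, t, ht⟩ := hx
      rw [← IsLocalizedModule.mk'_one S (LocalizedModule.mkLinearMap S M) x,
        IsLocalizedModule.mk'_eq_mk'_iff] at ht
      obtain ⟨c, hc⟩ := ht
      refine ⟨c * t, ?_⟩
      have : ((c * t : S) : R) • x = (c : R) • n := by
        simpa [Submonoid.smul_def, mul_smul] using hc
      rw [this]
      exact N.smul_mem _ hn
    choose u hu using key
    set s : R := ∏ x ∈ T, (u x : R) with hs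
    have hsS : s ∈ S := S.prod_mem fun x _ ↦ (u x).2
    refine ⟨N, hN, s, hsS, ?_⟩
    classical
    have hle : Submodule.span R (T : Set M) ≤ N.comap (LinearMap.lsmul R M s) := by
      rw [Submodule.span_le]
      intro x hx
      simp only [SetLike.mem_coe, Submodule.mem_comap, LinearMap.lsmul_apply]
      rw [hs, ← Finset.mul_prod_erase T _ hx, mul_comm, mul_smul]
      exact N.smul_mem _ (hu x)
    rw [hT, top_le_iff] at hle
    intro m
    have := hle ▸ Submodule.mem_top (R := R) (x := m)
    simpa using this
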